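/- arXiv:2310.17031 — 5 statements merged into one kernel-verified Lean document; each statement's English description precedes it below -/
import Mathlib

section
/- The function β : ℕ → ℝ defined by β(1) = 0 and β(p) = tr(Z · Σ_{s=1}^{p-1} Y(s)) for p > 1, where Y(s) = Σ_{r=0}^{s-1} A^r W (A^T)^r with W positive semidefinite and Z positive semidefinite, is convex in the discrete sense: β(i) ≤ (β(i+1) + β(i-1))/2 for all integers i ≥ 2. -/
open Matrix

lemma psd_trace_nonneg {m : ℕ} {M : Matrix (Fin m) (Fin m) ℝ} (hM : M.PosSemidef) :
    0 ≤ M.trace := by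
  rw [Matrix.trace]
  apply Finset.sum_nonneg
  intro i _
  exact hM.diag_nonneg

lemma psd_trace_mul_nonneg {m : ℕ} {P Q : Matrix (Fin m) (Fin m) ℝ}
    (hP : P.PosSemidef) (hQ : Q.PosSemidef) : 0 ≤ (P * Q).trace := by
  obtain ⟨k, B, hB⟩ : ∃ k, ∃ B : Matrix (Fin k) (Fin m) ℝ, Q = Bᵀ * B := by
    obtain ⟨k, v, hv⟩ := Matrix.posSemidef_iff_eq_sum_vecMulVec.mp hQ
    refine ⟨k, Matrix.of fun i j => v i j, ?_⟩
    rw [hv]; ext a b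
    simp [Matrix.mul_apply, vecMulVec_apply, Matrix.sum_apply]
  rw [hB, ← Matrix.mul_assoc, Matrix.trace_mul_cycle]
  exact psd_trace_nonneg (hP.mul_mul_conjTranspose_same B)

theorem stmt_0 (n : ℕ) (A W Z : Matrix (Fin n) (Fin n) ℝ)
    (hW : W.PosSemidef) (hZ : Z.PosSemidef)
    (Y : ℕ → Matrix (Fin n) (Fin n) ℝ)
    (hY : ∀ s, Y s = ∑ r ∈ Finset.range s, A ^ r * W * (Aᵀ) ^ r)
    (β : ℕ → ℝ)
    (hβ : ∀ p, β p = (Z * ∑ s ∈ Finset.Icc 1 (p - 1), Y s).trace) :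
    ∀ i : ℕ, 2 ≤ i → β i ≤ (β (i + 1) + β (i - 1)) / 2 := by
  intro i hi
  obtain ⟨j, rfl⟩ : ∃ j, i = j + 2 := ⟨i - 2, by omega⟩
  have hstep : ∀ k : ℕ, (∑ s ∈ Finset.Icc 1 (k + 1), Y s) =
      (∑ s ∈ Finset.Icc 1 k, Y s) + Y (k + 1) := by
    intro k
    exact Finset.sum_Icc_succ_top (by omega) Y
  have hYd : Y (j + 2) = Y (j + 1) + A ^ (j+1) * W * (Aᵀ) ^ (j+1) := by
    rw [hY, hY, Finset.sum_range_succ]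
  have key : 0 ≤ (Z * (A ^ (j+1) * W * (Aᵀ) ^ (j+1))).trace := by
    have hpsd : (A ^ (j+1) * W * (Aᵀ) ^ (j+1)).PosSemidef := by
      have := hW.mul_mul_conjTranspose_same (A ^ (j+1))
      simpa [Matrix.conjTranspose_eq_transpose_of_trivial, Matrix.transpose_pow] using this
    exact psd_trace_mul_nonneg hZ hpsd
  have e1 := hβ (j + 2)
  have e2 := hβ (j + 3)
  have e3 := hβ (j + 1)
  simp only [show j + 2 - 1 = j + 1 from rfl, show j + 3 - 1 = j + 2 from rfl,
    show j + 1 - 1 = j from rfl] at e1 e2 e3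
  rw [show j + 2 + 1 = j + 3 from rfl, show j + 2 - 1 = j + 1 from rfl, e1, e2, e3]
  rw [hstep (j+1), hstep j, hYd]
  simp only [Matrix.mul_add, Matrix.trace_add]
  linarith
end

section
/- Suppose the map Φ(P) = F_o(F_a(P)), where F_a(P) = P + P(γ²I − P)⁻¹P and F_o(P) = AᵀPA + Q, is applied iteratively: M₁ = P̄, M_{k+1} = Φ(M_k). If P̄ satisfies the Riccati fixed point P̄ = F_c(F_a(P̄)) with F_c(P) = AᵀPA + Q − AᵀPB(BᵀPB + R)⁻¹BᵀPA, R positive definite, and γ²I − M_k ≻ 0 for all k ∈ {1,…,h}, then M_{k+1} ⪰ M_k for all k ∈ {1,…,h−1}. -/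
open Matrix

section helpers2
variable {n : Type*} {m : Type*} [Fintype n] [Fintype m] [DecidableEq n]

set_option linter.unusedSectionVars false

lemma my_psd_congr {A : Matrix n n ℝ} (hA : A.PosSemidef) (B : Matrix n m ℝ) :
    (Bᵀ * A * B).PosSemidef := by
  have := hA.conjTranspose_mul_mul_same B
  rwa [conjTranspose_eq_transpose_of_trivial] at this

lemma my_psd_congr' {A : Matrix n n ℝ} (hA : A.PosSemidef) (B : Matrix m n ℝ) :
    (B * A * Bᵀ).PosSemidef := by
  have := hA.mul_mul_conjTranspose_same B
  rwa [conjTranspose_eq_transpose_of_trivial] at this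

lemma my_psd_smul {A : Matrix n n ℝ} (hA : A.PosSemidef) {c : ℝ} (hc : 0 ≤ c) :
    (c • A).PosSemidef := by
  have hAt : Aᵀ = A := by
    rw [← conjTranspose_eq_transpose_of_trivial]; exact hA.1
  rw [posSemidef_iff_dotProduct_mulVec]
  constructor
  · simp [Matrix.IsHermitian, conjTranspose_smul, hAt]
  · intro x
    have := hA.dotProduct_mulVec_nonneg x
    simp only [smul_mulVec, dotProduct_smul, smul_eq_mul]
    positivity

lemma my_pd_congr {A C : Matrix n n ℝ} (hA : A.PosDef) (hC : IsUnit C) :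
    (Cᵀ * A * C).PosDef := by
  rw [← conjTranspose_eq_transpose_of_trivial]
  rw [posDef_iff_dotProduct_mulVec]
  constructor
  · exact isHermitian_conjTranspose_mul_mul C hA.1
  · intro x hx
    have hinj := Matrix.mulVec_injective_iff_isUnit.mpr hC
    have hx' : C *ᵥ x ≠ 0 := fun hc => hx (hinj (by simpa using hc))
    have := hA.dotProduct_mulVec_pos hx'
    simpa only [star_mulVec, dotProduct_mulVec, vecMul_vecMul] using this

lemma my_exists_sqrt {B : Matrix n n ℝ} (hB : B.PosSemidef) :
    ∃ T : Matrix n n ℝ, T.PosSemidef ∧ T * T = B :=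
  by open scoped MatrixOrder in exact ⟨CFC.sqrt B, (CFC.sqrt_nonneg B).posSemidef, CFC.sqrt_mul_sqrt_self B hB.nonneg⟩

lemma my_transpose_eq {A : Matrix n n ℝ} (hA : A.IsHermitian) : Aᵀ = A := by
  rw [← conjTranspose_eq_transpose_of_trivial]; exact hA

lemma my_inv_antitone {P Q : Matrix n n ℝ} (hP : P.PosDef) (hQ : Q.PosDef)
    (hPQ : (P - Q).PosSemidef) : (Q⁻¹ - P⁻¹).PosSemidef := by
  obtain ⟨T, hTpsd, hTT⟩ := my_exists_sqrt hQ.posSemidef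
  have hTs : Tᵀ = T := my_transpose_eq hTpsd.isHermitian
  have hTd : IsUnit T.det := by
    have h2 : T.det * T.det = Q.det := by rw [← det_mul, hTT]
    have hd := hQ.det_pos
    have : T.det ≠ 0 := fun h0 => by rw [h0, mul_zero] at h2; exact hd.ne h2
    exact this.isUnit
  have hTu : IsUnit T := (Matrix.isUnit_iff_isUnit_det T).mpr hTd
  have hTiu : IsUnit (T⁻¹) := Matrix.isUnit_nonsing_inv_iff.mpr hTu
  have hTis : (T⁻¹)ᵀ = T⁻¹ := by rw [transpose_nonsing_inv, hTs]
  have hXpd : (T⁻¹ * P * T⁻¹).PosDef := by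
    have := my_pd_congr hP hTiu
    rwa [hTis] at this
  obtain ⟨S, hSpsd, hSS⟩ := my_exists_sqrt hXpd.posSemidef
  have hSs : Sᵀ = S := my_transpose_eq hSpsd.isHermitian
  have hSd : IsUnit S.det := by
    have h2 : S.det * S.det = (T⁻¹ * P * T⁻¹).det := by rw [← det_mul, hSS]
    have hd := hXpd.det_pos
    have : S.det ≠ 0 := fun h0 => by rw [h0, mul_zero] at h2; exact hd.ne h2
    exact this.isUnit
  have c1 : ∀ B : Matrix n n ℝ, T * (T⁻¹ * B) = B :=
    fun B => Matrix.mul_nonsing_inv_cancel_left T B hTd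
  have c2 : ∀ B : Matrix n n ℝ, T⁻¹ * (T * B) = B :=
    fun B => Matrix.nonsing_inv_mul_cancel_left T B hTd
  have c3 : ∀ B : Matrix n n ℝ, S * (S⁻¹ * B) = B :=
    fun B => Matrix.mul_nonsing_inv_cancel_left S B hSd
  have c4 : ∀ B : Matrix n n ℝ, S⁻¹ * (S * B) = B :=
    fun B => Matrix.nonsing_inv_mul_cancel_left S B hSd
  have h0 : T * (T⁻¹ * P * T⁻¹) * T = P := by
    simp [Matrix.mul_assoc, c1, c2, Matrix.mul_nonsing_inv _ hTd,
      Matrix.nonsing_inv_mul _ hTd]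
  have hPeq : P = T * (S * (S * T)) := by
    rw [← h0, ← hSS]; simp [Matrix.mul_assoc]
  set Mm := T⁻¹ * (S⁻¹ * T⁻¹) with hMm
  have hMs : Mmᵀ = Mm := by
    simp [hMm, transpose_mul, transpose_nonsing_inv, hTs, hSs, Matrix.mul_assoc]
  have key : Mm * (P - Q) * Mmᵀ = Q⁻¹ - P⁻¹ := by
    rw [hMs, Matrix.mul_sub, Matrix.sub_mul]
    congr 1
    · rw [hPeq, ← hTT, Matrix.mul_inv_rev]
      simp [hMm, Matrix.mul_assoc, c1, c2, c3, c4]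
    · rw [hPeq, ← hTT]
      simp [hMm, Matrix.mul_inv_rev, Matrix.mul_assoc, c1, c2, c3, c4]
  have := my_psd_congr' hPQ Mm
  rwa [key] at this


lemma my_fa_eq {P : Matrix n n ℝ} {c : ℝ}
    (hG : IsUnit (c • (1 : Matrix n n ℝ) - P).det) :
    P + P * (c • (1 : Matrix n n ℝ) - P)⁻¹ * P
      = (c * c) • (c • (1 : Matrix n n ℝ) - P)⁻¹ - c • (1 : Matrix n n ℝ) := by
  set G := c • (1 : Matrix n n ℝ) - P with hGdef
  have hcomm : P * G = G * P := by
    rw [hGdef]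
    simp [Matrix.mul_sub, Matrix.sub_mul, mul_smul_comm, smul_mul_assoc]
  have h2 : (P + P * G⁻¹ * P) * G = ((c * c) • G⁻¹ - c • (1 : Matrix n n ℝ)) * G := by
    have e : P * G⁻¹ * P * G = P * P := by
      rw [Matrix.mul_assoc (P * G⁻¹) P G, hcomm, Matrix.mul_assoc P G⁻¹ (G * P),
        Matrix.nonsing_inv_mul_cancel_left G P hG]
    rw [Matrix.add_mul, e, Matrix.sub_mul, smul_mul_assoc, smul_mul_assoc,
      Matrix.nonsing_inv_mul _ hG, Matrix.one_mul, hGdef]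
    simp only [Matrix.mul_sub, Matrix.sub_mul, mul_smul_comm, smul_mul_assoc,
      Matrix.mul_one, Matrix.one_mul, smul_sub, smul_smul]
    abel
  calc P + P * G⁻¹ * P = (P + P * G⁻¹ * P) * G * G⁻¹ :=
        (Matrix.mul_nonsing_inv_cancel_right _ _ hG).symm
    _ = ((c * c) • G⁻¹ - c • (1 : Matrix n n ℝ)) * G * G⁻¹ := by rw [h2]
    _ = (c * c) • G⁻¹ - c • (1 : Matrix n n ℝ) :=
        Matrix.mul_nonsing_inv_cancel_right _ _ hG


end helpers2

set_option maxHeartbeats 1000000 in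
theorem stmt_10 (n m : ℕ)
    (A Q : Matrix (Fin n) (Fin n) ℝ) (B : Matrix (Fin n) (Fin m) ℝ)
    (R : Matrix (Fin m) (Fin m) ℝ) (hQ : Q.PosSemidef) (hR : R.PosDef)
    (γ : ℝ) (hγ : 0 < γ)
    (Fa Fo Fc : Matrix (Fin n) (Fin n) ℝ → Matrix (Fin n) (Fin n) ℝ)
    (hFa : ∀ P, Fa P = P + P * (γ ^ 2 • (1 : Matrix (Fin n) (Fin n) ℝ) - P)⁻¹ * P)
    (hFo : ∀ P, Fo P = Aᵀ * P * A + Q)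
    (hFc : ∀ P, Fc P = Aᵀ * P * A + Q - Aᵀ * P * B * (Bᵀ * P * B + R)⁻¹ * Bᵀ * P * A)
    (Pbar : Matrix (Fin n) (Fin n) ℝ) (hPbar : Pbar.PosDef)
    (hfix : Pbar = Fc (Fa Pbar))
    (h : ℕ) (M : ℕ → Matrix (Fin n) (Fin n) ℝ)
    (hM1 : M 1 = Pbar) (hMiter : ∀ k, M (k + 1) = Fo (Fa (M k)))
    (hpd : ∀ k, 1 ≤ k → k ≤ h → (γ ^ 2 • (1 : Matrix (Fin n) (Fin n) ℝ) - M k).PosDef) :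
    ∀ k, 1 ≤ k → k ≤ h - 1 → (M (k + 1) - M k).PosSemidef := by
  intro k hk1
  induction k, hk1 using Nat.le_induction with
  | base =>
    intro hbase
    have hh : 1 ≤ h := by omega
    have hGpd : (γ ^ 2 • (1 : Matrix (Fin n) (Fin n) ℝ) - Pbar).PosDef := by
      have := hpd 1 le_rfl hh
      rwa [hM1] at this
    have hSval := hFa Pbar
    have hSpsd : (Fa Pbar).PosSemidef := by
      rw [hSval]
      have hPt : Pbarᵀ = Pbar := my_transpose_eq hPbar.isHermitian
      have h1 := my_psd_congr hGpd.inv.posSemidef Pbar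
      rw [hPt] at h1
      exact hPbar.posSemidef.add h1
    have hSt : (Fa Pbar)ᵀ = Fa Pbar := my_transpose_eq hSpsd.isHermitian
    have hW : (Bᵀ * Fa Pbar * B + R).PosDef := Matrix.PosDef.posSemidef_add (my_psd_congr hSpsd B) hR
    have hWinv : ((Bᵀ * Fa Pbar * B + R)⁻¹).PosSemidef := hW.inv.posSemidef
    have h2 : M (1 + 1) = Aᵀ * Fa Pbar * A + Q := by rw [hMiter 1, hM1, hFo]
    have h1' : M 1 = Aᵀ * Fa Pbar * A + Q
        - Aᵀ * Fa Pbar * B * (Bᵀ * Fa Pbar * B + R)⁻¹ * Bᵀ * Fa Pbar * A := by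
      rw [hM1]; exact hfix.trans (hFc (Fa Pbar))
    have hdiff : M (1 + 1) - M 1
        = Aᵀ * Fa Pbar * B * (Bᵀ * Fa Pbar * B + R)⁻¹ * Bᵀ * Fa Pbar * A := by
      rw [h2, h1', sub_sub_cancel]
    rw [hdiff]
    have hCt : (Bᵀ * Fa Pbar * A)ᵀ = Aᵀ * Fa Pbar * B := by
      simp [transpose_mul, hSt, Matrix.mul_assoc]
    have hps := my_psd_congr hWinv (Bᵀ * Fa Pbar * A)
    rw [hCt] at hps
    simpa only [Matrix.mul_assoc] using hps
  | succ k hk ih =>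
    intro hkh
    have ihD := ih (by omega)
    have hGk := hpd k hk (by omega)
    have hGk1 := hpd (k + 1) (by omega) (by omega)
    have hsub : ((γ ^ 2 • (1 : Matrix (Fin n) (Fin n) ℝ) - M k)
        - (γ ^ 2 • (1 : Matrix (Fin n) (Fin n) ℝ) - M (k + 1))).PosSemidef := by
      have e : (γ ^ 2 • (1 : Matrix (Fin n) (Fin n) ℝ) - M k)
          - (γ ^ 2 • (1 : Matrix (Fin n) (Fin n) ℝ) - M (k + 1)) = M (k + 1) - M k := by
        abel
      rw [e]; exact ihD
    have hinv := my_inv_antitone hGk hGk1 hsub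
    have hd1 : IsUnit (γ ^ 2 • (1 : Matrix (Fin n) (Fin n) ℝ) - M k).det :=
      (Matrix.isUnit_iff_isUnit_det _).mp hGk.isUnit
    have hd2 : IsUnit (γ ^ 2 • (1 : Matrix (Fin n) (Fin n) ℝ) - M (k + 1)).det :=
      (Matrix.isUnit_iff_isUnit_det _).mp hGk1.isUnit
    have e1 := my_fa_eq (P := M k) hd1
    have e2 := my_fa_eq (P := M (k + 1)) hd2
    have hdiff : M (k + 1 + 1) - M (k + 1)
        = Aᵀ * ((γ ^ 2 * γ ^ 2) • ((γ ^ 2 • (1 : Matrix (Fin n) (Fin n) ℝ) - M (k + 1))⁻¹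
            - (γ ^ 2 • (1 : Matrix (Fin n) (Fin n) ℝ) - M k)⁻¹)) * A := by
      have hA2 : M (k + 1 + 1) = Aᵀ * ((γ ^ 2 * γ ^ 2) • (γ ^ 2 • (1 : Matrix (Fin n) (Fin n) ℝ) - M (k + 1))⁻¹ - γ ^ 2 • (1 : Matrix (Fin n) (Fin n) ℝ)) * A + Q := by
        rw [hMiter (k + 1), hFo, hFa (M (k + 1)), e2]
      have hA1 : M (k + 1) = Aᵀ * ((γ ^ 2 * γ ^ 2) • (γ ^ 2 • (1 : Matrix (Fin n) (Fin n) ℝ) - M k)⁻¹ - γ ^ 2 • (1 : Matrix (Fin n) (Fin n) ℝ)) * A + Q := by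
        rw [hMiter k, hFo, hFa (M k), e1]
      rw [hA2, hA1]
      simp only [Matrix.mul_sub, Matrix.sub_mul, mul_smul_comm, smul_mul_assoc, smul_sub]
      abel
    rw [hdiff]
    exact my_psd_congr (my_psd_smul hinv (mul_nonneg (sq_nonneg γ) (sq_nonneg γ))) A
end

section
/- For symmetric matrices 0 ⪯ P₁ ⪯ P₂ with γ²I − P₂ ≻ 0, the composed Riccati map satisfies F_c(F_a(P₁)) ⪯ F_c(F_a(P₂)), where F_a(P) = P + P(γ²I−P)⁻¹P and F_c(P) = AᵀPA + Q − AᵀPB(BᵀPB+R)⁻¹BᵀPA with R ≻ 0. -/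
open Matrix

lemma psd_smul {n : ℕ} {M : Matrix (Fin n) (Fin n) ℝ} (hM : M.PosSemidef) {c : ℝ} (hc : 0 ≤ c) :
    (c • M).PosSemidef := by
  rw [posSemidef_iff_dotProduct_mulVec] at hM ⊢
  refine ⟨?_, fun x => ?_⟩
  · unfold Matrix.IsHermitian
    rw [conjTranspose_smul, hM.1]
    simp
  · simp only [smul_mulVec, dotProduct_smul, smul_eq_mul]
    exact mul_nonneg hc (hM.2 x)

lemma inv_antitone {n : ℕ} {S₁ S₂ : Matrix (Fin n) (Fin n) ℝ}
    (h₁ : S₁.PosDef) (h₂ : S₂.PosDef) (h : (S₁ - S₂).PosSemidef) :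
    (S₂⁻¹ - S₁⁻¹).PosSemidef := by
  haveI := h₁.isUnit.invertible
  haveI := h₂.inv.isUnit.invertible
  have key : (fromBlocks S₁ (1 : Matrix (Fin n) (Fin n) ℝ) ((1 : Matrix (Fin n) (Fin n) ℝ))ᴴ S₂⁻¹).PosSemidef := by
    rw [PosDef.fromBlocks₂₂ S₁ 1 h₂.inv]
    rw [nonsing_inv_nonsing_inv _ ((isUnit_iff_isUnit_det _).mp h₂.isUnit)]
    simpa using h
  rw [PosDef.fromBlocks₁₁ 1 S₂⁻¹ h₁] at key
  simpa using key

lemma fa_id {n : ℕ} {γ : ℝ} {S : Matrix (Fin n) (Fin n) ℝ} (hS : S.PosDef) :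
    (γ ^ 2 • (1 : Matrix (Fin n) (Fin n) ℝ) - S) + (γ ^ 2 • (1 : Matrix (Fin n) (Fin n) ℝ) - S) * S⁻¹ * (γ ^ 2 • (1 : Matrix (Fin n) (Fin n) ℝ) - S)
      = γ ^ 4 • S⁻¹ - γ ^ 2 • (1 : Matrix (Fin n) (Fin n) ℝ) := by
  have hd := (isUnit_iff_isUnit_det _).mp hS.isUnit
  have h1 : S * S⁻¹ = 1 := mul_nonsing_inv _ hd
  have h2 : S⁻¹ * S = 1 := nonsing_inv_mul _ hd
  simp only [Matrix.sub_mul, Matrix.mul_sub, Matrix.smul_mul, Matrix.mul_smul,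
    Matrix.one_mul, Matrix.mul_one, h1, h2, smul_smul]
  module


lemma fc_key {n m : ℕ} (A M₁ M₂ : Matrix (Fin n) (Fin n) ℝ) (B : Matrix (Fin n) (Fin m) ℝ)
    (R S₁ S₂ : Matrix (Fin m) (Fin m) ℝ) (K₁ K₂ : Matrix (Fin m) (Fin n) ℝ)
    (hK1 : S₁ * K₁ = Bᵀ * M₁ * A) (hK2 : S₂ * K₂ = Bᵀ * M₂ * A)
    (hK1t : Aᵀ * M₁ * B = K₁ᵀ * S₁) (hK2t : Aᵀ * M₂ * B = K₂ᵀ * S₂)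
    (bmb1 : Bᵀ * M₁ * B = S₁ - R) (bmb2 : Bᵀ * M₂ * B = S₂ - R) :
    Aᵀ * M₂ * A - K₂ᵀ * (S₂ * K₂) - (Aᵀ * M₁ * A - K₁ᵀ * (S₁ * K₁))
      = (A - B * K₂)ᵀ * (M₂ - M₁) * (A - B * K₂) + (K₂ - K₁)ᵀ * S₁ * (K₂ - K₁) := by
  have t1 : Aᵀ * (M₂ * (B * K₂)) = K₂ᵀ * (S₂ * K₂) := by
    rw [show Aᵀ * (M₂ * (B * K₂)) = Aᵀ * M₂ * B * K₂ by simp only [Matrix.mul_assoc],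
      hK2t, Matrix.mul_assoc]
  have t2 : K₂ᵀ * (Bᵀ * (M₂ * A)) = K₂ᵀ * (S₂ * K₂) := by
    rw [show Bᵀ * (M₂ * A) = Bᵀ * M₂ * A by simp only [Matrix.mul_assoc], ← hK2]
  have t3 : K₂ᵀ * (Bᵀ * (M₂ * (B * K₂))) = K₂ᵀ * (S₂ * K₂) - K₂ᵀ * (R * K₂) := by
    rw [show Bᵀ * (M₂ * (B * K₂)) = Bᵀ * M₂ * B * K₂ by simp only [Matrix.mul_assoc],
      bmb2, Matrix.sub_mul, Matrix.mul_sub]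
  have t4 : Aᵀ * (M₁ * (B * K₂)) = K₁ᵀ * (S₁ * K₂) := by
    rw [show Aᵀ * (M₁ * (B * K₂)) = Aᵀ * M₁ * B * K₂ by simp only [Matrix.mul_assoc],
      hK1t, Matrix.mul_assoc]
  have t5 : K₂ᵀ * (Bᵀ * (M₁ * A)) = K₂ᵀ * (S₁ * K₁) := by
    rw [show Bᵀ * (M₁ * A) = Bᵀ * M₁ * A by simp only [Matrix.mul_assoc], ← hK1]
  have t6 : K₂ᵀ * (Bᵀ * (M₁ * (B * K₂))) = K₂ᵀ * (S₁ * K₂) - K₂ᵀ * (R * K₂) := by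
    rw [show Bᵀ * (M₁ * (B * K₂)) = Bᵀ * M₁ * B * K₂ by simp only [Matrix.mul_assoc],
      bmb1, Matrix.sub_mul, Matrix.mul_sub]
  simp only [transpose_sub, transpose_mul, Matrix.sub_mul, Matrix.mul_sub, Matrix.mul_assoc,
    t1, t2, t3, t4, t5, t6]
  abel

lemma fc_mono {n m : ℕ} (A : Matrix (Fin n) (Fin n) ℝ) (B : Matrix (Fin n) (Fin m) ℝ)
    (R : Matrix (Fin m) (Fin m) ℝ) (hR : R.PosDef)
    {M₁ M₂ : Matrix (Fin n) (Fin n) ℝ}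
    (h₁ : M₁.PosSemidef) (h₂ : M₂.PosSemidef) (hd : (M₂ - M₁).PosSemidef) :
    ((Aᵀ * M₂ * A - Aᵀ * M₂ * B * (Bᵀ * M₂ * B + R)⁻¹ * Bᵀ * M₂ * A)
     - (Aᵀ * M₁ * A - Aᵀ * M₁ * B * (Bᵀ * M₁ * B + R)⁻¹ * Bᵀ * M₁ * A)).PosSemidef := by
  have hct : ∀ (a b : ℕ) (C : Matrix (Fin a) (Fin b) ℝ), Cᴴ = Cᵀ := fun a b C =>
    conjTranspose_eq_transpose_of_trivial C
  have hM₁s : M₁ᵀ = M₁ := by rw [← hct]; exact h₁.1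
  have hM₂s : M₂ᵀ = M₂ := by rw [← hct]; exact h₂.1
  have hRs : Rᵀ = R := by rw [← hct]; exact hR.1
  have hS₁ : (Bᵀ * M₁ * B + R).PosDef := by
    have := h₁.conjTranspose_mul_mul_same B
    rw [hct] at this
    exact Matrix.PosDef.posSemidef_add this hR
  have hS₂ : (Bᵀ * M₂ * B + R).PosDef := by
    have := h₂.conjTranspose_mul_mul_same B
    rw [hct] at this
    exact Matrix.PosDef.posSemidef_add this hR
  obtain ⟨S₁, hS₁def⟩ : ∃ S, Bᵀ * M₁ * B + R = S := ⟨_, rfl⟩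
  obtain ⟨S₂, hS₂def⟩ : ∃ S, Bᵀ * M₂ * B + R = S := ⟨_, rfl⟩
  rw [hS₁def] at hS₁
  rw [hS₂def] at hS₂
  have hd₁ := (isUnit_iff_isUnit_det _).mp hS₁.isUnit
  have hd₂ := (isUnit_iff_isUnit_det _).mp hS₂.isUnit
  have hS₁s : S₁ᵀ = S₁ := by rw [← hct]; exact hS₁.1
  have hS₂s : S₂ᵀ = S₂ := by rw [← hct]; exact hS₂.1
  obtain ⟨K₁, hK₁def⟩ : ∃ K, S₁⁻¹ * (Bᵀ * M₁ * A) = K := ⟨_, rfl⟩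
  obtain ⟨K₂, hK₂def⟩ : ∃ K, S₂⁻¹ * (Bᵀ * M₂ * A) = K := ⟨_, rfl⟩
  have hK1 : S₁ * K₁ = Bᵀ * M₁ * A := by
    rw [← hK₁def, ← Matrix.mul_assoc, mul_nonsing_inv _ hd₁, Matrix.one_mul]
  have hK2 : S₂ * K₂ = Bᵀ * M₂ * A := by
    rw [← hK₂def, ← Matrix.mul_assoc, mul_nonsing_inv _ hd₂, Matrix.one_mul]
  have hK1t : Aᵀ * M₁ * B = K₁ᵀ * S₁ := by
    have := congrArg Matrix.transpose hK1
    simp only [transpose_mul, hS₁s, hM₁s, transpose_transpose] at this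
    rw [Matrix.mul_assoc]; exact this.symm
  have hK2t : Aᵀ * M₂ * B = K₂ᵀ * S₂ := by
    have := congrArg Matrix.transpose hK2
    simp only [transpose_mul, hS₂s, hM₂s, transpose_transpose] at this
    rw [Matrix.mul_assoc]; exact this.symm
  have q1 : Aᵀ * M₁ * B * (Bᵀ * M₁ * B + R)⁻¹ * Bᵀ * M₁ * A = K₁ᵀ * (S₁ * K₁) := by
    rw [hS₁def, hK1, hK1t]
    simp only [Matrix.mul_assoc]
    rw [← Matrix.mul_assoc S₁ S₁⁻¹, mul_nonsing_inv _ hd₁, Matrix.one_mul]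
  have q2 : Aᵀ * M₂ * B * (Bᵀ * M₂ * B + R)⁻¹ * Bᵀ * M₂ * A = K₂ᵀ * (S₂ * K₂) := by
    rw [hS₂def, hK2, hK2t]
    simp only [Matrix.mul_assoc]
    rw [← Matrix.mul_assoc S₂ S₂⁻¹, mul_nonsing_inv _ hd₂, Matrix.one_mul]
  rw [q1, q2, fc_key A M₁ M₂ B R S₁ S₂ K₁ K₂ hK1 hK2 hK1t hK2t
    (by rw [← hS₁def]; abel) (by rw [← hS₂def]; abel)]
  have e1 : ((A - B * K₂)ᵀ * (M₂ - M₁) * (A - B * K₂)).PosSemidef := by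
    have := hd.conjTranspose_mul_mul_same (A - B * K₂)
    rwa [hct] at this
  have e2 : ((K₂ - K₁)ᵀ * S₁ * (K₂ - K₁)).PosSemidef := by
    have := hS₁.posSemidef.conjTranspose_mul_mul_same (K₂ - K₁)
    rwa [hct] at this
  exact e1.add e2


theorem stmt_11 (n m : ℕ)
    (A Q : Matrix (Fin n) (Fin n) ℝ) (B : Matrix (Fin n) (Fin m) ℝ)
    (R : Matrix (Fin m) (Fin m) ℝ) (hQ : Q.PosSemidef) (hR : R.PosDef)
    (γ : ℝ) (hγ : 0 < γ)
    (Fa Fc : Matrix (Fin n) (Fin n) ℝ → Matrix (Fin n) (Fin n) ℝ)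
    (hFa : ∀ P, Fa P = P + P * (γ ^ 2 • (1 : Matrix (Fin n) (Fin n) ℝ) - P)⁻¹ * P)
    (hFc : ∀ P, Fc P = Aᵀ * P * A + Q - Aᵀ * P * B * (Bᵀ * P * B + R)⁻¹ * Bᵀ * P * A)
    (P₁ P₂ : Matrix (Fin n) (Fin n) ℝ)
    (hP₁ : P₁.PosSemidef) (h12 : (P₂ - P₁).PosSemidef)
    (hγ2 : (γ ^ 2 • (1 : Matrix (Fin n) (Fin n) ℝ) - P₂).PosDef) :
    (Fc (Fa P₂) - Fc (Fa P₁)).PosSemidef := by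
  have hct : ∀ (a b : ℕ) (C : Matrix (Fin a) (Fin b) ℝ), Cᴴ = Cᵀ := fun a b C =>
    conjTranspose_eq_transpose_of_trivial C
  have hP₂ : P₂.PosSemidef := by
    have := hP₁.add h12
    rwa [show P₁ + (P₂ - P₁) = P₂ by abel] at this
  have hS₁ : (γ ^ 2 • (1 : Matrix (Fin n) (Fin n) ℝ) - P₁).PosDef := by
    have := Matrix.PosDef.add_posSemidef hγ2 h12
    rwa [show (γ ^ 2 • (1 : Matrix (Fin n) (Fin n) ℝ) - P₂) + (P₂ - P₁)
      = γ ^ 2 • (1 : Matrix (Fin n) (Fin n) ℝ) - P₁ by abel] at this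
  have hP₁s : P₁ᵀ = P₁ := by rw [← hct]; exact hP₁.1
  have hP₂s : P₂ᵀ = P₂ := by rw [← hct]; exact hP₂.1
  -- Fa P₁ and Fa P₂ are positive semidefinite
  have hM₁ : (Fa P₁).PosSemidef := by
    rw [hFa]
    refine hP₁.add ?_
    have := hS₁.inv.posSemidef.conjTranspose_mul_mul_same P₁
    rwa [hct, hP₁s] at this
  have hM₂ : (Fa P₂).PosSemidef := by
    rw [hFa]
    refine hP₂.add ?_
    have := hγ2.inv.posSemidef.conjTranspose_mul_mul_same P₂
    rwa [hct, hP₂s] at this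
  -- Fa is monotone
  have e₁ : Fa P₁ = γ ^ 4 • (γ ^ 2 • (1 : Matrix (Fin n) (Fin n) ℝ) - P₁)⁻¹
      - γ ^ 2 • (1 : Matrix (Fin n) (Fin n) ℝ) := by
    have h := fa_id (γ := γ) hS₁
    rwa [show γ ^ 2 • (1 : Matrix (Fin n) (Fin n) ℝ)
      - (γ ^ 2 • (1 : Matrix (Fin n) (Fin n) ℝ) - P₁) = P₁ by abel, ← hFa] at h
  have e₂ : Fa P₂ = γ ^ 4 • (γ ^ 2 • (1 : Matrix (Fin n) (Fin n) ℝ) - P₂)⁻¹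
      - γ ^ 2 • (1 : Matrix (Fin n) (Fin n) ℝ) := by
    have h := fa_id (γ := γ) hγ2
    rwa [show γ ^ 2 • (1 : Matrix (Fin n) (Fin n) ℝ)
      - (γ ^ 2 • (1 : Matrix (Fin n) (Fin n) ℝ) - P₂) = P₂ by abel, ← hFa] at h
  have hFadiff : (Fa P₂ - Fa P₁).PosSemidef := by
    have hsub : ((γ ^ 2 • (1 : Matrix (Fin n) (Fin n) ℝ) - P₁)
        - (γ ^ 2 • (1 : Matrix (Fin n) (Fin n) ℝ) - P₂)).PosSemidef := by
      rwa [show (γ ^ 2 • (1 : Matrix (Fin n) (Fin n) ℝ) - P₁)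
        - (γ ^ 2 • (1 : Matrix (Fin n) (Fin n) ℝ) - P₂) = P₂ - P₁ by abel]
    have hinv := inv_antitone hS₁ hγ2 hsub
    have := psd_smul hinv (by positivity : (0:ℝ) ≤ γ ^ 4)
    rwa [show γ ^ 4 • ((γ ^ 2 • (1 : Matrix (Fin n) (Fin n) ℝ) - P₂)⁻¹
        - (γ ^ 2 • (1 : Matrix (Fin n) (Fin n) ℝ) - P₁)⁻¹) = Fa P₂ - Fa P₁ by
      rw [e₁, e₂, smul_sub]; abel] at this
  have key := fc_mono A B R hR hM₁ hM₂ hFadiff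
  rwa [show (Aᵀ * Fa P₂ * A - Aᵀ * Fa P₂ * B * (Bᵀ * Fa P₂ * B + R)⁻¹ * Bᵀ * Fa P₂ * A)
     - (Aᵀ * Fa P₁ * A - Aᵀ * Fa P₁ * B * (Bᵀ * Fa P₁ * B + R)⁻¹ * Bᵀ * Fa P₁ * A)
     = Fc (Fa P₂) - Fc (Fa P₁) by rw [hFc, hFc]; abel] at key
end

section
/- For a symmetric matrix P with 0 ⪯ P and γ²I − P ≻ 0, and for any vectors x, u, the maximum over w of [−γ²wᵀw + (Ax+Bu+w)ᵀP(Ax+Bu+w)] is attained at w* = (γ²I−P)⁻¹P(Ax+Bu) and equals (Ax+Bu)ᵀF_a(P)(Ax+Bu), where F_a(P) = P + P(γ²I−P)⁻¹P. -/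
open Matrix

lemma symm_dot' {n : ℕ} {A : Matrix (Fin n) (Fin n) ℝ} (hA : Aᵀ = A)
    (x y : Fin n → ℝ) : x ⬝ᵥ A *ᵥ y = y ⬝ᵥ A *ᵥ x := by
  rw [dotProduct_mulVec, ← hA, vecMul_transpose, dotProduct_comm, hA]

theorem stmt_12 (n m : ℕ)
    (A : Matrix (Fin n) (Fin n) ℝ) (B : Matrix (Fin n) (Fin m) ℝ)
    (γ : ℝ) (hγ : 0 < γ)
    (P : Matrix (Fin n) (Fin n) ℝ) (hP : P.PosSemidef)
    (hγP : (γ ^ 2 • (1 : Matrix (Fin n) (Fin n) ℝ) - P).PosDef)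
    (Fa : Matrix (Fin n) (Fin n) ℝ → Matrix (Fin n) (Fin n) ℝ)
    (hFa : ∀ X, Fa X = X + X * (γ ^ 2 • (1 : Matrix (Fin n) (Fin n) ℝ) - X)⁻¹ * X)
    (x : Fin n → ℝ) (u : Fin m → ℝ) (v : Fin n → ℝ)
    (hv : v = A *ᵥ x + B *ᵥ u)
    (wstar : Fin n → ℝ)
    (hw : wstar = (γ ^ 2 • (1 : Matrix (Fin n) (Fin n) ℝ) - P)⁻¹ *ᵥ (P *ᵥ v)) :
    (∀ w : Fin n → ℝ,
        -(γ ^ 2) * (w ⬝ᵥ w) + (v + w) ⬝ᵥ (P *ᵥ (v + w)) ≤ v ⬝ᵥ (Fa P *ᵥ v)) ∧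
      -(γ ^ 2) * (wstar ⬝ᵥ wstar) + (v + wstar) ⬝ᵥ (P *ᵥ (v + wstar)) =
        v ⬝ᵥ (Fa P *ᵥ v) := by
  set M : Matrix (Fin n) (Fin n) ℝ := γ ^ 2 • (1 : Matrix (Fin n) (Fin n) ℝ) - P with hMdef
  have hPt : Pᵀ = P := hP.isHermitian
  have hdet : IsUnit M.det := isUnit_iff_ne_zero.mpr hγP.det_pos.ne'
  have hMul : M * M⁻¹ = 1 := mul_nonsing_inv _ hdet
  -- M *ᵥ wstar = P *ᵥ v
  have h1 : M *ᵥ wstar = P *ᵥ v := by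
    rw [hw, mulVec_mulVec, hMul, one_mulVec]
  -- P *ᵥ wstar = γ² • wstar - P *ᵥ v
  have hPs : P *ᵥ wstar = γ ^ 2 • wstar - P *ᵥ v := by
    have h2 : M *ᵥ wstar = γ ^ 2 • wstar - P *ᵥ wstar := by
      rw [hMdef, sub_mulVec, smul_mulVec, one_mulVec]
    rw [h1] at h2
    rw [eq_sub_iff_add_eq] at h2 ⊢
    rw [add_comm]
    exact h2
  -- value of Fa
  have hFav : Fa P *ᵥ v = P *ᵥ v + P *ᵥ wstar := by
    rw [hFa, add_mulVec, Matrix.mul_assoc, ← mulVec_mulVec, ← mulVec_mulVec, ← hw]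
  -- key scalar identity
  have key : ∀ w : Fin n → ℝ,
      -(γ ^ 2) * (w ⬝ᵥ w) + (v + w) ⬝ᵥ (P *ᵥ (v + w))
        = v ⬝ᵥ (Fa P *ᵥ v) - (w - wstar) ⬝ᵥ (M *ᵥ (w - wstar)) := by
    intro w
    have hsym1 : v ⬝ᵥ P *ᵥ w = w ⬝ᵥ P *ᵥ v := symm_dot' hPt v w
    have hsym2 : v ⬝ᵥ P *ᵥ wstar = wstar ⬝ᵥ P *ᵥ v := symm_dot' hPt v wstar
    have hsym3 : w ⬝ᵥ P *ᵥ wstar = wstar ⬝ᵥ P *ᵥ w := symm_dot' hPt w wstar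
    have hcw : w ⬝ᵥ wstar = wstar ⬝ᵥ w := dotProduct_comm _ _
    -- expand M *ᵥ (w - wstar)
    have hexp : M *ᵥ (w - wstar) = γ ^ 2 • w - P *ᵥ w - (γ ^ 2 • wstar - P *ᵥ wstar) := by
      rw [hMdef, sub_mulVec, smul_mulVec, one_mulVec, mulVec_sub, smul_sub]
      abel
    rw [hFav, hexp, hPs]
    simp only [mulVec_add, dotProduct_add, add_dotProduct, dotProduct_sub, sub_dotProduct,
      dotProduct_smul, smul_dotProduct, smul_eq_mul]
    ring_nf
    rw [hPs] at hsym2 hsym3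
    simp only [dotProduct_sub, dotProduct_smul, smul_eq_mul] at hsym2 hsym3
    have hcw' : γ ^ 2 * (w ⬝ᵥ wstar) = γ ^ 2 * (wstar ⬝ᵥ w) := by rw [hcw]
    linarith [hsym1, hsym2, hsym3, hcw']
  constructor
  · intro w
    have hpos : 0 ≤ (w - wstar) ⬝ᵥ (M *ᵥ (w - wstar)) := by
      simpa using hγP.posSemidef.dotProduct_mulVec_nonneg (w - wstar)
    rw [key w]
    linarith
  · rw [key wstar]
    simp
end

section
/- For a symmetric matrix M with 0 ⪯ M and γ²I − M ≻ 0, F_a(M) = P + P(γ²I−P)⁻¹P satisfies F_a(M) ⪰ M, and xᵀF_o(F_a(M))x = xᵀQx + max_w (Ax+w)ᵀM(Ax+w) − γ²wᵀw for every x, where F_o(P) = AᵀPA + Q; consequently M ⪯ N with γ²I − N ≻ 0 implies F_o(F_a(M)) ⪯ F_o(F_a(N)). -/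
open Matrix

lemma dot_symm {n : ℕ} {B : Matrix (Fin n) (Fin n) ℝ} (hB : B.IsHermitian) (a b : Fin n → ℝ) :
    a ⬝ᵥ (B *ᵥ b) = b ⬝ᵥ (B *ᵥ a) := by
  have ht : Bᵀ = B := by have := hB.eq; rwa [conjTranspose_eq_transpose_of_trivial] at this
  rw [dotProduct_mulVec, ← mulVec_transpose, ht, dotProduct_comm]

lemma key_id {n : ℕ} (γ : ℝ) (P : Matrix (Fin n) (Fin n) ℝ) (hP : P.IsHermitian)
    (hS : (γ^2 • (1 : Matrix (Fin n) (Fin n) ℝ) - P).PosDef) (v w : Fin n → ℝ) :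
    (v + w) ⬝ᵥ (P *ᵥ (v + w)) - γ^2 * (w ⬝ᵥ w)
      = v ⬝ᵥ ((P + P * (γ^2 • (1 : Matrix (Fin n) (Fin n) ℝ) - P)⁻¹ * P) *ᵥ v)
        - (w - (γ^2 • (1 : Matrix (Fin n) (Fin n) ℝ) - P)⁻¹ *ᵥ (P *ᵥ v)) ⬝ᵥ
          ((γ^2 • (1 : Matrix (Fin n) (Fin n) ℝ) - P) *ᵥ
            (w - (γ^2 • (1 : Matrix (Fin n) (Fin n) ℝ) - P)⁻¹ *ᵥ (P *ᵥ v))) := by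
  set S : Matrix (Fin n) (Fin n) ℝ := γ^2 • (1 : Matrix (Fin n) (Fin n) ℝ) - P with hSdef
  have hdet : IsUnit S.det := hS.det_pos.ne'.isUnit
  have hSS : S * S⁻¹ = 1 := mul_nonsing_inv S hdet
  set w₀ : Fin n → ℝ := S⁻¹ *ᵥ (P *ᵥ v) with hw0
  have h1 : S *ᵥ w₀ = P *ᵥ v := by
    rw [hw0, mulVec_mulVec, hSS, one_mulVec]
  have h3 : w₀ ⬝ᵥ (P *ᵥ v) = v ⬝ᵥ ((P * S⁻¹ * P) *ᵥ v) := by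
    rw [← mulVec_mulVec, ← mulVec_mulVec, dot_symm hP, dotProduct_comm]
  have h4 : w₀ ⬝ᵥ (S *ᵥ w) = w ⬝ᵥ (P *ᵥ v) := by
    rw [dot_symm hS.isHermitian, h1]
  have h5 : v ⬝ᵥ (P *ᵥ w) = w ⬝ᵥ (P *ᵥ v) := dot_symm hP v w
  have h6 : w ⬝ᵥ (S *ᵥ w) = γ^2 * (w ⬝ᵥ w) - w ⬝ᵥ (P *ᵥ w) := by
    rw [hSdef, sub_mulVec, smul_mulVec, one_mulVec, dotProduct_sub, dotProduct_smul,
      smul_eq_mul]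
  have expand : (w - w₀) ⬝ᵥ (S *ᵥ (w - w₀))
      = w ⬝ᵥ (S *ᵥ w) - w ⬝ᵥ (S *ᵥ w₀) - w₀ ⬝ᵥ (S *ᵥ w) + w₀ ⬝ᵥ (S *ᵥ w₀) := by
    rw [mulVec_sub, dotProduct_sub, sub_dotProduct, sub_dotProduct]; ring
  have lhs_expand : (v + w) ⬝ᵥ (P *ᵥ (v + w))
      = v ⬝ᵥ (P *ᵥ v) + v ⬝ᵥ (P *ᵥ w) + w ⬝ᵥ (P *ᵥ v) + w ⬝ᵥ (P *ᵥ w) := by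
    rw [mulVec_add, add_dotProduct, dotProduct_add, dotProduct_add]; ring
  have rhs_expand : v ⬝ᵥ ((P + P * S⁻¹ * P) *ᵥ v)
      = v ⬝ᵥ (P *ᵥ v) + v ⬝ᵥ ((P * S⁻¹ * P) *ᵥ v) := by
    rw [add_mulVec, dotProduct_add]
  rw [lhs_expand, rhs_expand, expand, h1, h4, h6, h5, ← h3]
  ring

lemma greatest_aux {n : ℕ} (γ : ℝ) (P : Matrix (Fin n) (Fin n) ℝ) (hP : P.PosSemidef)
    (hS : (γ^2 • (1 : Matrix (Fin n) (Fin n) ℝ) - P).PosDef) (v : Fin n → ℝ) :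
    IsGreatest
      (Set.range fun w : Fin n → ℝ => (v + w) ⬝ᵥ (P *ᵥ (v + w)) - γ^2 * (w ⬝ᵥ w))
      (v ⬝ᵥ ((P + P * (γ^2 • (1 : Matrix (Fin n) (Fin n) ℝ) - P)⁻¹ * P) *ᵥ v)) := by
  constructor
  · refine ⟨(γ^2 • (1 : Matrix (Fin n) (Fin n) ℝ) - P)⁻¹ *ᵥ (P *ᵥ v), ?_⟩
    dsimp only
    rw [key_id γ P hP.1 hS]
    simp
  · rintro y ⟨w, rfl⟩
    dsimp only
    rw [key_id γ P hP.1 hS]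
    have h := hS.posSemidef.dotProduct_mulVec_nonneg (w - (γ^2 • (1 : Matrix (Fin n) (Fin n) ℝ) - P)⁻¹ *ᵥ (P *ᵥ v))
    simp only [star_trivial] at h
    linarith

theorem stmt_13 (n : ℕ)
    (A Q : Matrix (Fin n) (Fin n) ℝ) (hQ : Q.PosSemidef)
    (γ : ℝ) (hγ : 0 < γ)
    (Fa Fo : Matrix (Fin n) (Fin n) ℝ → Matrix (Fin n) (Fin n) ℝ)
    (hFa : ∀ P, Fa P = P + P * (γ ^ 2 • (1 : Matrix (Fin n) (Fin n) ℝ) - P)⁻¹ * P)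
    (hFo : ∀ P, Fo P = Aᵀ * P * A + Q)
    (M N : Matrix (Fin n) (Fin n) ℝ)
    (hM : M.PosSemidef) (hMN : (N - M).PosSemidef)
    (hγN : (γ ^ 2 • (1 : Matrix (Fin n) (Fin n) ℝ) - N).PosDef) :
    (Fa M - M).PosSemidef ∧
      (∀ x : Fin n → ℝ,
        IsGreatest
          (Set.range fun w : Fin n → ℝ =>
            (A *ᵥ x + w) ⬝ᵥ (M *ᵥ (A *ᵥ x + w)) - γ ^ 2 * (w ⬝ᵥ w))
          (x ⬝ᵥ (Fo (Fa M) *ᵥ x) - x ⬝ᵥ (Q *ᵥ x))) ∧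
      (Fo (Fa N) - Fo (Fa M)).PosSemidef := by
  have hγM : (γ ^ 2 • (1 : Matrix (Fin n) (Fin n) ℝ) - M).PosDef := by
    have he : γ ^ 2 • (1 : Matrix (Fin n) (Fin n) ℝ) - M
        = (γ ^ 2 • (1 : Matrix (Fin n) (Fin n) ℝ) - N) + (N - M) := by abel
    rw [he]; exact hγN.add_posSemidef hMN
  have hN : N.PosSemidef := by
    have := hM.add hMN
    simpa using this
  have hAconj : Aᴴ = Aᵀ := Matrix.ext fun i j => star_trivial _
  -- products P * S⁻¹ * P are PSD
  have prodPSD : ∀ (P : Matrix (Fin n) (Fin n) ℝ), P.PosSemidef →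
      (γ ^ 2 • (1 : Matrix (Fin n) (Fin n) ℝ) - P).PosDef →
      (P * (γ ^ 2 • (1 : Matrix (Fin n) (Fin n) ℝ) - P)⁻¹ * P).PosSemidef := by
    intro P hP hS
    have := hS.inv.posSemidef.mul_mul_conjTranspose_same P
    rwa [hP.1.eq] at this
  have hFaM : (Fa M).PosSemidef := by
    rw [hFa]; exact hM.add (prodPSD M hM hγM)
  have hFaN : (Fa N).PosSemidef := by
    rw [hFa]; exact hN.add (prodPSD N hN hγN)
  have hFoPSD : ∀ (P : Matrix (Fin n) (Fin n) ℝ), P.PosSemidef → (Fo P).PosSemidef := by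
    intro P hP
    rw [hFo]
    refine Matrix.PosSemidef.add ?_ hQ
    have := hP.conjTranspose_mul_mul_same A
    rwa [hAconj] at this
  -- conjugation identity
  have conjd : ∀ (B : Matrix (Fin n) (Fin n) ℝ) (x : Fin n → ℝ),
      x ⬝ᵥ ((Aᵀ * B * A) *ᵥ x) = (A *ᵥ x) ⬝ᵥ (B *ᵥ (A *ᵥ x)) := by
    intro B x
    rw [← mulVec_mulVec, ← mulVec_mulVec, dotProduct_mulVec, vecMul_transpose]
  have hval : ∀ (P : Matrix (Fin n) (Fin n) ℝ) (x : Fin n → ℝ),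
      x ⬝ᵥ (Fo (Fa P) *ᵥ x) - x ⬝ᵥ (Q *ᵥ x)
        = (A *ᵥ x) ⬝ᵥ (Fa P *ᵥ (A *ᵥ x)) := by
    intro P x
    rw [hFo, add_mulVec, dotProduct_add, conjd]
    ring
  refine ⟨?_, ?_, ?_⟩
  · have h := prodPSD M hM hγM
    have he : Fa M - M = M * (γ ^ 2 • (1 : Matrix (Fin n) (Fin n) ℝ) - M)⁻¹ * M := by
      rw [hFa]; abel
    rwa [he]
  · intro x
    have := greatest_aux γ M hM hγM (A *ᵥ x)
    rw [hval M x, hFa]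
    exact this
  · have hHerm : (Fo (Fa N) - Fo (Fa M)).IsHermitian :=
      (hFoPSD _ hFaN).1.sub (hFoPSD _ hFaM).1
    refine Matrix.PosSemidef.of_dotProduct_mulVec_nonneg hHerm (fun x => ?_)
    simp only [star_trivial, sub_mulVec, dotProduct_sub]
    have hM2 := greatest_aux γ M hM hγM (A *ᵥ x)
    have hN2 := greatest_aux γ N hN hγN (A *ᵥ x)
    obtain ⟨w, hw⟩ := hM2.1
    have step1 : (A *ᵥ x + w) ⬝ᵥ (M *ᵥ (A *ᵥ x + w)) - γ^2 * (w ⬝ᵥ w)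
        ≤ (A *ᵥ x + w) ⬝ᵥ (N *ᵥ (A *ᵥ x + w)) - γ^2 * (w ⬝ᵥ w) := by
      have h := hMN.dotProduct_mulVec_nonneg (A *ᵥ x + w)
      simp only [star_trivial, sub_mulVec, dotProduct_sub] at h
      linarith
    have step2 := hN2.2 ⟨w, rfl⟩
    have hvm : (A *ᵥ x) ⬝ᵥ (Fa M *ᵥ (A *ᵥ x))
        ≤ (A *ᵥ x) ⬝ᵥ (Fa N *ᵥ (A *ᵥ x)) := by
      rw [hFa M, hFa N]
      calc (A *ᵥ x) ⬝ᵥ ((M + M * (γ ^ 2 • 1 - M)⁻¹ * M) *ᵥ (A *ᵥ x))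
          = (A *ᵥ x + w) ⬝ᵥ (M *ᵥ (A *ᵥ x + w)) - γ^2 * (w ⬝ᵥ w) := hw.symm
        _ ≤ (A *ᵥ x + w) ⬝ᵥ (N *ᵥ (A *ᵥ x + w)) - γ^2 * (w ⬝ᵥ w) := step1
        _ ≤ _ := step2
    have e1 := hval M x
    have e2 := hval N x
    linarith [e1, e2, hvm]
end
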